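/- Merging multiple seeds into a single unified seed preserves the expected spread: given seeds S and a non-seed vertex u with in-edges from h distinct seeds having probabilities p_1,…,p_h, replacing these h edges by a single edge from a new seed s' to u with probability 1 − ∏_{i=1}^h (1 − p_i) (doing this for all non-seed vertices, and taking S' = {s'}) yields a graph whose expected spread from s' restricted to the original non-seed vertices equals the expected spread from S in the original graph. -/

import Mathlib

/-!
Independent cascade model via random sampled (live-edge) graphs.
-/

open Finset

noncomputable section
open scoped Classical

variable {V : Type*}

/-- Probability weight of a sampled graph `ω`. -/
def sampleWeight [Fintype V] (p : V → V → ℝ) (ω : V → V → Bool) : ℝ :=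
  ∏ u : V, ∏ v : V, if ω u v then p u v else 1 - p u v

/-- Reachability from `s` to `w` in the sampled graph `ω`, through vertices
outside the blocker set `B`. -/
def ReachB (ω : V → V → Bool) (B : Finset V) (s w : V) : Prop :=
  Relation.ReflTransGen (fun a b => ω a b = true ∧ a ∉ B ∧ b ∉ B) s w

/-- Number of vertices reachable from the seed set `S` in the sampled graph `ω`
restricted to `V \ B`. -/
def sigmaB [Fintype V] (ω : V → V → Bool) (B S : Finset V) : ℕ :=
  (Finset.univ.filter fun w => ∃ s ∈ S, ReachB ω B s w).card

/-- Expected spread of seed set `S` when the blocker set `B` is removed. -/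
def spread [Fintype V] (p : V → V → ℝ) (S B : Finset V) : ℝ :=
  ∑ ω : V → V → Bool, sampleWeight p ω * (sigmaB ω B S : ℝ)

/-- Expected number of activated vertices among those in `T`, with seed set `S`
(no blockers). -/
def spreadOn [Fintype V] (p : V → V → ℝ) (S T : Finset V) : ℝ :=
  ∑ ω : V → V → Bool,
    sampleWeight p ω * ((T.filter fun w => ∃ s ∈ S, ReachB ω ∅ s w).card : ℝ)

/-- The graph obtained by merging all seeds of `S` into one unified seed (the
vertex `none` of `Option V`): for each non-seed vertex `u` the `h` seed edges
with probabilities `p₁, …, p_h` are replaced by a single edge from the unified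
seed with probability `1 - ∏ᵢ (1 - pᵢ)`; edges among non-seed vertices are
kept, and all edges incident to original seeds are removed. -/
def mergedP [Fintype V] (p : V → V → ℝ) (S : Finset V) :
    Option V → Option V → ℝ := fun a b =>
  match a, b with
  | none, some v => if v ∈ S then 0 else 1 - ∏ s ∈ S, (1 - p s v)
  | some a', some b' => if a' ∈ S ∨ b' ∈ S then 0 else p a' b'
  | _, none => 0

/-! ### Auxiliary general lemmas -/

lemma sum_prod_bool {ι : Type*} [Fintype ι] [DecidableEq ι] (w : ι → Bool → ℝ) :
    ∑ c : ι → Bool, ∏ i, w i (c i) = ∏ i, (w i true + w i false) := by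
  classical
  have h := Finset.prod_univ_sum (κ := fun _ : ι => Bool)
      (t := fun _ => (Finset.univ : Finset Bool)) (f := fun i b => w i b)
  rw [Fintype.piFinset_univ] at h
  rw [← h]
  congr 1; ext i
  simp [Fintype.sum_bool]

lemma prod_boole_eq {ι : Type*} [Fintype ι] {γ : Type*} [DecidableEq γ] (a h : ι → γ) :
    (∏ i, if a i = h i then (1:ℝ) else 0) = if a = h then 1 else 0 := by
  by_cases hh : a = h
  · subst hh; simp
  · rw [if_neg hh]
    obtain ⟨i, hi⟩ := Function.ne_iff.mp hh
    exact Finset.prod_eq_zero (Finset.mem_univ i) (by simp [hi])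

lemma master {ι β γ : Type*} [Fintype ι] [DecidableEq ι] [Fintype β] [Fintype γ] [DecidableEq γ]
    (wt : ι → β → ℝ) (m : ι → β → γ) (g : (ι → γ) → ℝ) :
    ∑ f : ι → β, (∏ i, wt i (f i)) * g (fun i => m i (f i)) =
      ∑ h : ι → γ, (∏ i, ∑ b : β, (if m i b = h i then wt i b else 0)) * g h := by
  classical
  have key : ∀ h : ι → γ, (∏ i, ∑ b : β, (if m i b = h i then wt i b else 0))
      = ∑ f : ι → β, ∏ i, (if m i (f i) = h i then wt i (f i) else 0) := by
    intro h
    have hh := Finset.prod_univ_sum (κ := fun _ : ι => β)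
        (t := fun _ => (Finset.univ : Finset β))
        (f := fun i b => if m i b = h i then wt i b else 0)
    rw [Fintype.piFinset_univ] at hh
    exact hh
  simp_rw [key, Finset.sum_mul]
  rw [Finset.sum_comm]
  refine Finset.sum_congr rfl fun f _ => ?_
  have h2 : ∀ h : ι → γ, (∏ i, (if m i (f i) = h i then wt i (f i) else 0))
      = (∏ i, wt i (f i)) * (if (fun i => m i (f i)) = h then 1 else 0) := by
    intro h
    rw [← prod_boole_eq (fun i => m i (f i)) h, ← Finset.prod_mul_distrib]
    refine Finset.prod_congr rfl fun i _ => ?_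
    by_cases hc : m i (f i) = h i <;> simp [hc]
  simp_rw [h2, mul_assoc, ← Finset.mul_sum]
  congr 1
  have h3 : ∀ h : ι → γ, (if (fun i => m i (f i)) = h then (1:ℝ) else 0) * g h
      = (if (fun i => m i (f i)) = h then g h else 0) := by
    intro h; by_cases hc : (fun i => m i (f i)) = h <;> simp [hc]
  simp_rw [h3]
  rw [Finset.sum_ite_eq (Finset.univ) (fun i => m i (f i)) g]
  simp

lemma maskedSum {ι : Type*} [Fintype ι] [DecidableEq ι] (q : ι → ℝ) (Pb : ι → Bool) (d : ι → Bool) :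
    (∑ e : ι → Bool, if (fun a => if Pb a then false else e a) = d
        then ∏ a, (if e a then q a else 1 - q a) else 0)
    = ∏ a, if Pb a then (if d a then 0 else 1) else (if d a then q a else 1 - q a) := by
  have h1 : ∀ e : ι → Bool,
      (if (fun a => if Pb a then false else e a) = d
        then (∏ a, (if e a then q a else 1 - q a)) else (0:ℝ))
      = ∏ a, ((if e a then q a else 1 - q a) *
          (if (if Pb a then false else e a) = d a then 1 else 0)) := by
    intro e
    by_cases h : (fun a => if Pb a then false else e a) = d
    · rw [if_pos h, Finset.prod_mul_distrib, prod_boole_eq, if_pos h, mul_one]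
    · rw [if_neg h, Finset.prod_mul_distrib, prod_boole_eq, if_neg h, mul_zero]
  simp_rw [h1]
  rw [sum_prod_bool (fun a bit => (if bit then q a else 1 - q a) *
      (if (if Pb a then false else bit) = d a then 1 else 0))]
  refine Finset.prod_congr rfl fun a _ => ?_
  cases hP : Pb a <;> cases hd : d a <;> simp [hP, hd]

lemma prod_not_ind {ι : Type*} [Fintype ι] (Pb : ι → Bool) (e : ι → Bool) :
    (∏ a, if Pb a = true ∧ e a = true then (0:ℝ) else 1)
      = if (∃ a, Pb a = true ∧ e a = true) then 0 else 1 := by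
  by_cases h : ∃ a, Pb a = true ∧ e a = true
  · obtain ⟨a, ha⟩ := h
    rw [if_pos ⟨a, ha⟩]
    exact Finset.prod_eq_zero (Finset.mem_univ a) (if_pos ha)
  · rw [if_neg h]
    exact Finset.prod_eq_one fun a _ => if_neg (fun hc => h ⟨a, hc⟩)

lemma falsePart {ι : Type*} [Fintype ι] [DecidableEq ι] (q : ι → ℝ) (Pb : ι → Bool) (d : ι → Bool) :
    (∑ e : ι → Bool, if (fun a => if Pb a then false else e a) = d
        then (if (∃ a, Pb a = true ∧ e a = true) then 0 else 1) *
          ∏ a, (if e a then q a else 1 - q a) else 0)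
    = (∏ a ∈ Finset.univ.filter (fun a => Pb a = true), (1 - q a)) *
      ∏ a, if Pb a then (if d a then 0 else 1) else (if d a then q a else 1 - q a) := by
  have h1 : ∀ e : ι → Bool,
      (if (fun a => if Pb a then false else e a) = d
        then (if (∃ a, Pb a = true ∧ e a = true) then 0 else 1) *
          (∏ a, (if e a then q a else 1 - q a)) else (0:ℝ))
      = ∏ a, ((if e a then q a else 1 - q a) * (if Pb a = true ∧ e a = true then 0 else 1) *
          (if (if Pb a then false else e a) = d a then 1 else 0)) := by
    intro e
    have hprod : ∏ a, ((if e a then q a else 1 - q a) * (if Pb a = true ∧ e a = true then 0 else 1) *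
          (if (if Pb a then false else e a) = d a then 1 else 0))
        = ((∏ a, (if e a then q a else 1 - q a)) * (if (∃ a, Pb a = true ∧ e a = true) then 0 else 1)) *
          (if (fun a => if Pb a then false else e a) = d then 1 else 0) := by
      rw [Finset.prod_mul_distrib, Finset.prod_mul_distrib, prod_not_ind, prod_boole_eq]
    rw [hprod]
    by_cases h : (fun a => if Pb a then false else e a) = d
    · rw [if_pos h, if_pos h, mul_one]; ring
    · rw [if_neg h, if_neg h, mul_zero]
  simp_rw [h1]
  rw [sum_prod_bool (fun a bit => (if bit then q a else 1 - q a) * (if Pb a = true ∧ bit = true then 0 else 1) *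
      (if (if Pb a then false else bit) = d a then 1 else 0))]
  have hfac : ∀ i, ((((if (true : Bool) = true then q i else 1 - q i) * if Pb i = true ∧ (true : Bool) = true then 0 else 1) *
          if (if Pb i then false else true) = d i then 1 else 0) +
        (((if (false : Bool) = true then q i else 1 - q i) * if Pb i = true ∧ (false : Bool) = true then 0 else 1) *
          if (if Pb i then false else false) = d i then 1 else 0))
      = if Pb i then (1 - q i) * (if d i then (0:ℝ) else 1) else (if d i then q i else 1 - q i) := by
    intro i
    cases hP : Pb i <;> cases hd : d i <;> simp [hP, hd]
  rw [Finset.prod_congr rfl (fun i _ => hfac i)]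
  have split1 : (∏ a : ι, (if Pb a then (1 - q a) * (if d a then (0:ℝ) else 1) else (if d a then q a else 1 - q a)))
      = ((∏ a ∈ Finset.univ.filter (fun a => Pb a = true), (1 - q a)) *
          ∏ a ∈ Finset.univ.filter (fun a => Pb a = true), (if d a then (0:ℝ) else 1)) *
        ∏ a ∈ Finset.univ.filter (fun a => ¬ (Pb a = true)), (if d a then q a else 1 - q a) := by
    rw [← Finset.prod_filter_mul_prod_filter_not Finset.univ (fun a => Pb a = true), ← Finset.prod_mul_distrib]
    congr 1
    · exact Finset.prod_congr rfl fun a ha => if_pos (Finset.mem_filter.mp ha).2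
    · exact Finset.prod_congr rfl fun a ha => if_neg (Finset.mem_filter.mp ha).2
  have split2 : (∏ a : ι, (if Pb a then (if d a then (0:ℝ) else 1) else (if d a then q a else 1 - q a)))
      = (∏ a ∈ Finset.univ.filter (fun a => Pb a = true), (if d a then (0:ℝ) else 1)) *
        ∏ a ∈ Finset.univ.filter (fun a => ¬ (Pb a = true)), (if d a then q a else 1 - q a) := by
    rw [← Finset.prod_filter_mul_prod_filter_not Finset.univ (fun a => Pb a = true)]
    congr 1
    · exact Finset.prod_congr rfl fun a ha => if_pos (Finset.mem_filter.mp ha).2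
    · exact Finset.prod_congr rfl fun a ha => if_neg (Finset.mem_filter.mp ha).2
  rw [split1, split2]
  ring

/-- A `Bool`-valued OR over a `Bool`-valued predicate. -/
def orBitB {ι : Type*} [Fintype ι] (Pb : ι → Bool) (e : ι → Bool) : Bool :=
  decide (∃ a, Pb a = true ∧ e a = true)

lemma orBitB_iff {ι : Type*} [Fintype ι] {Pb e : ι → Bool} :
    orBitB Pb e = true ↔ ∃ a, Pb a = true ∧ e a = true := by
  unfold orBitB
  exact decide_eq_true_iff

lemma maskedSumOr {ι : Type*} [Fintype ι] [DecidableEq ι] (q : ι → ℝ) (Pb : ι → Bool) (d : ι → Bool) (b : Bool) :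
    (∑ e : ι → Bool, if (orBitB Pb e, fun a => if Pb a then false else e a) = (b, d)
        then ∏ a, (if e a then q a else 1 - q a) else 0)
    = (if b then 1 - ∏ a ∈ Finset.univ.filter (fun a => Pb a = true), (1 - q a)
        else ∏ a ∈ Finset.univ.filter (fun a => Pb a = true), (1 - q a)) *
      ∏ a, if Pb a then (if d a then 0 else 1) else (if d a then q a else 1 - q a) := by
  have hsplit : ∀ e : ι → Bool,
      (if (orBitB Pb e, fun a => if Pb a then false else e a) = (b, d)
        then (∏ a, (if e a then q a else 1 - q a)) else (0:ℝ))
      = (if orBitB Pb e = b then (1:ℝ) else 0) *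
        (if (fun a => if Pb a then false else e a) = d
          then (∏ a, (if e a then q a else 1 - q a)) else 0) := by
    intro e
    by_cases h1 : orBitB Pb e = b <;>
      by_cases h2 : (fun a => if Pb a then false else e a) = d <;>
        simp [Prod.ext_iff, h1, h2]
  simp_rw [hsplit]
  have hFP := falsePart q Pb d
  have hMS := maskedSum q Pb d
  cases b with
  | false =>
    have hind : ∀ e : ι → Bool, (if orBitB Pb e = false then (1:ℝ) else 0)
        = (if (∃ a, Pb a = true ∧ e a = true) then 0 else 1) := by
      intro e
      by_cases h : (∃ a, Pb a = true ∧ e a = true)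
      · rw [if_pos h, if_neg]
        simp [orBitB_iff.mpr h]
      · rw [if_neg h, if_pos]
        cases hob : orBitB Pb e
        · rfl
        · exact absurd (orBitB_iff.mp hob) h
    simp_rw [hind]
    have hmerge : ∀ e : ι → Bool,
        (if (∃ a, Pb a = true ∧ e a = true) then (0:ℝ) else 1) *
          (if (fun a => if Pb a then false else e a) = d
            then (∏ a, (if e a then q a else 1 - q a)) else 0)
        = (if (fun a => if Pb a then false else e a) = d
            then (if (∃ a, Pb a = true ∧ e a = true) then 0 else 1) *
              (∏ a, (if e a then q a else 1 - q a)) else 0) := by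
      intro e
      by_cases h : (fun a => if Pb a then false else e a) = d <;> simp [h]
    simp_rw [hmerge]
    rw [hFP]
    simp
  | true =>
    have hind : ∀ e : ι → Bool, (if orBitB Pb e = true then (1:ℝ) else 0)
        = 1 - (if (∃ a, Pb a = true ∧ e a = true) then 0 else 1) := by
      intro e
      by_cases h : (∃ a, Pb a = true ∧ e a = true)
      · rw [if_pos (orBitB_iff.mpr h), if_pos h]; ring
      · rw [if_neg h, if_neg]
        · ring
        · intro hob; exact h (orBitB_iff.mp hob)
    simp_rw [hind, sub_mul, one_mul]
    rw [Finset.sum_sub_distrib]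
    have hmerge : ∀ e : ι → Bool,
        (if (∃ a, Pb a = true ∧ e a = true) then (0:ℝ) else 1) *
          (if (fun a => if Pb a then false else e a) = d
            then (∏ a, (if e a then q a else 1 - q a)) else 0)
        = (if (fun a => if Pb a then false else e a) = d
            then (if (∃ a, Pb a = true ∧ e a = true) then 0 else 1) *
              (∏ a, (if e a then q a else 1 - q a)) else 0) := by
      intro e
      by_cases h : (fun a => if Pb a then false else e a) = d <;> simp [h]
    simp_rw [hmerge]
    rw [hFP, hMS]
    rw [if_pos trivial]
    ring

/-! ### Reduced configurations -/

/-- Bool-valued membership with a fixed decidability instance. -/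
def memB (S : Finset V) (a : V) : Bool := decide (a ∈ S)

lemma memB_iff {S : Finset V} {a : V} : memB S a = true ↔ a ∈ S := by
  unfold memB
  exact decide_eq_true_iff

lemma memB_true {S : Finset V} {a : V} (h : a ∈ S) : memB S a = true := memB_iff.mpr h

lemma memB_false {S : Finset V} {a : V} (h : a ∉ S) : memB S a = false := by
  cases hb : memB S a
  · rfl
  · exact absurd (memB_iff.mp hb) h

/-- Closed-form reduced weight of one "column" `v` together with its collapsed
seed bit. -/
def CF [Fintype V] (p : V → V → ℝ) (S : Finset V) (v : V) (x : Bool × (V → Bool)) : ℝ :=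
  (if memB S v then (if x.1 then 0 else 1)
   else (if x.1 then 1 - ∏ s ∈ S, (1 - p s v) else ∏ s ∈ S, (1 - p s v))) *
  ∏ a : V, (if memB S a || memB S v then (if x.2 a then 0 else 1)
            else (if x.2 a then p a v else 1 - p a v))

/-- Reduction map for columns of the original graph. -/
def mR [Fintype V] (S : Finset V) (v : V) (c : V → Bool) : Bool × (V → Bool) :=
  (if memB S v then false else orBitB (fun a => memB S a) c,
   fun a => if memB S a || memB S v then false else c a)

/-- Reduction map for columns of the merged graph. -/
def mL (S : Finset V) : Option V → (Option V → Bool) → Bool × (V → Bool) := fun t c =>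
  match t with
  | none => (false, fun _ => false)
  | some v => (if memB S v then false else c none,
      fun a => if memB S a || memB S v then false else c (some a))

/-- Number of activated vertices determined by a reduced configuration. -/
def gfun [Fintype V] (S : Finset V) (h : V → Bool × (V → Bool)) : ℝ :=
  (((Finset.univ \ S).filter fun w => ∃ v, (h v).1 = true ∧
      Relation.ReflTransGen (fun a b => ((h b).2 a) = true) v w).card : ℝ)

lemma filter_memB_eq (S : Finset V) [Fintype V] :
    Finset.univ.filter (fun a => memB S a = true) = S := by
  ext a; simp [memB_iff]

lemma prod_if_false_fun [Fintype V] (d : V → Bool) :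
    (∏ a : V, if d a then (0:ℝ) else 1) = if (fun _ : V => false) = d then 1 else 0 := by
  rw [← prod_boole_eq (fun _ : V => false) d]
  refine Finset.prod_congr rfl fun a _ => ?_
  cases hd : d a <;> simp [hd]

lemma QiR [Fintype V] (p : V → V → ℝ) (S : Finset V) (v : V) (x : Bool × (V → Bool)) :
    (∑ c : V → Bool, if mR S v c = x
        then (∏ u : V, if c u then p u v else 1 - p u v) else 0) = CF p S v x := by
  obtain ⟨b, d⟩ := x
  by_cases hv : v ∈ S
  · have hvb := memB_true hv
    have hm : ∀ c : V → Bool, mR S v c = (false, fun _ => false) := by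
      intro c
      unfold mR
      refine Prod.ext ?_ ?_
      · simp [hvb]
      · funext a; simp [hvb]
    simp_rw [hm]
    have hsum : (∑ c : V → Bool, if ((false, fun _ => false) : Bool × (V → Bool)) = (b, d)
        then (∏ u : V, if c u then p u v else 1 - p u v) else 0)
        = if ((false, fun _ => false) : Bool × (V → Bool)) = (b, d)
            then (∑ c : V → Bool, ∏ u : V, if c u then p u v else 1 - p u v) else 0 := by
      by_cases h : ((false, fun _ => false) : Bool × (V → Bool)) = (b, d) <;> simp [h]
    rw [hsum, sum_prod_bool (fun u bit => if bit = true then p u v else 1 - p u v)]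
    have h1 : (∏ u : V, ((if (true : Bool) = true then p u v else 1 - p u v)
        + (if (false : Bool) = true then p u v else 1 - p u v))) = 1 := by
      apply Finset.prod_eq_one; intro u _; simp
    rw [h1]
    unfold CF
    simp only [hvb, Bool.or_true, if_true]
    rw [prod_if_false_fun d]
    cases b <;> by_cases hd : (fun _ : V => false) = d <;>
      simp [Prod.ext_iff, hd]
  · have hvb := memB_false hv
    have hm : ∀ c : V → Bool, mR S v c
        = (orBitB (fun a => memB S a) c, fun a => if memB S a then false else c a) := by
      intro c
      unfold mR
      refine Prod.ext ?_ ?_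
      · simp [hvb]
      · funext a; simp [hvb]
    simp_rw [hm]
    rw [maskedSumOr (fun u => p u v) (fun a => memB S a) d b]
    unfold CF
    rw [filter_memB_eq, hvb]
    simp only [Bool.or_false, Bool.false_eq_true, if_false]

lemma QiL [Fintype V] (p : V → V → ℝ) (S : Finset V) (v : V) (x : Bool × (V → Bool)) :
    (∑ c : Option V → Bool, if mL S (some v) c = x
        then (∏ u : Option V, if c u then mergedP p S u (some v)
              else 1 - mergedP p S u (some v)) else 0) = CF p S v x := by
  obtain ⟨b, d⟩ := x
  have hre := Equiv.sum_comp (Equiv.piOptionEquivProd (β := fun _ : Option V => Bool)).symm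
      (fun c : Option V → Bool => if mL S (some v) c = (b, d)
        then (∏ u : Option V, if c u then mergedP p S u (some v)
              else 1 - mergedP p S u (some v)) else 0)
  rw [← hre, Fintype.sum_prod_type]
  have hterm : ∀ (yb : Bool) (k : V → Bool),
      (if mL S (some v) ((Equiv.piOptionEquivProd (β := fun _ : Option V => Bool)).symm (yb, k)) = (b, d)
        then (∏ u : Option V,
          if ((Equiv.piOptionEquivProd (β := fun _ : Option V => Bool)).symm (yb, k)) u
            then mergedP p S u (some v) else 1 - mergedP p S u (some v)) else 0)
      = (if (if memB S v then false else yb) = b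
          then (if yb then mergedP p S none (some v) else 1 - mergedP p S none (some v)) else 0) *
        (if (fun a => if memB S a || memB S v then false else k a) = d
          then (∏ a : V, if k a then mergedP p S (some a) (some v)
                else 1 - mergedP p S (some a) (some v)) else 0) := by
    intro yb k
    have hml : mL S (some v) ((Equiv.piOptionEquivProd (β := fun _ : Option V => Bool)).symm (yb, k))
        = ((if memB S v then false else yb),
            fun a => if memB S a || memB S v then false else k a) := rfl
    rw [hml]
    have hW : (∏ u : Option V,
          if ((Equiv.piOptionEquivProd (β := fun _ : Option V => Bool)).symm (yb, k)) u
            then mergedP p S u (some v) else 1 - mergedP p S u (some v))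
        = (if yb then mergedP p S none (some v) else 1 - mergedP p S none (some v)) *
          (∏ a : V, if k a then mergedP p S (some a) (some v)
                else 1 - mergedP p S (some a) (some v)) := by
      rw [Fintype.prod_option]
      rfl
    rw [hW]
    have pairsplit : ∀ (A bb : Bool) (B dd : V → Bool) (X Y : ℝ),
        (if (A, B) = (bb, dd) then X * Y else 0)
        = (if A = bb then X else 0) * (if B = dd then Y else 0) := by
      intro A bb B dd X Y
      by_cases hA : A = bb
      · by_cases hB : B = dd
        · rw [if_pos (by rw [Prod.ext_iff]; exact ⟨hA, hB⟩), if_pos hA, if_pos hB]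
        · rw [if_neg (by rw [Prod.ext_iff]; tauto), if_neg hB, mul_zero]
      · rw [if_neg (by rw [Prod.ext_iff]; tauto), if_neg hA, zero_mul]
    exact pairsplit _ b _ d _ _
  simp_rw [hterm]
  rw [← Finset.sum_mul_sum]
  unfold CF
  congr 1
  · rw [Fintype.sum_bool]
    by_cases hv : v ∈ S
    · have hvb := memB_true hv
      have hmm : mergedP p S none (some v) = 0 := by simp [mergedP, hv]
      cases b <;> simp [hvb, hmm]
    · have hvb := memB_false hv
      have hmm : mergedP p S none (some v) = 1 - ∏ s ∈ S, (1 - p s v) := by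
        simp [mergedP, hv]
      cases b <;> simp [hvb, hmm]
  · rw [maskedSum (fun a => mergedP p S (some a) (some v)) (fun a => memB S a || memB S v) d]
    refine Finset.prod_congr rfl fun a _ => ?_
    cases hab : (memB S a || memB S v)
    · have ha : a ∉ S := by
        intro h; rw [memB_true h] at hab; simp at hab
      have hv : v ∉ S := by
        intro h; rw [memB_true h] at hab; simp at hab
      have : mergedP p S (some a) (some v) = p a v := by
        simp [mergedP, ha, hv]
      simp only [if_neg (by simp : ¬ (false : Bool) = true)]
      rw [this]
    · simp

lemma QiLnone [Fintype V] (p : V → V → ℝ) (S : Finset V) :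
    (∑ x : Bool × (V → Bool), ∑ c : Option V → Bool,
        if mL S none c = x then (∏ u : Option V, if c u then mergedP p S u none
            else 1 - mergedP p S u none) else 0) = 1 := by
  rw [Finset.sum_comm]
  have h1 : ∀ c : Option V → Bool,
      (∑ x : Bool × (V → Bool), if mL S none c = x
        then (∏ u : Option V, if c u then mergedP p S u none
            else 1 - mergedP p S u none) else 0)
      = ∏ u : Option V, if c u then mergedP p S u none else 1 - mergedP p S u none := by
    intro c
    rw [Finset.sum_ite_eq (Finset.univ) (mL S none c)]
    simp
  simp_rw [h1]
  have h2 : ∀ u : Option V, mergedP p S u none = 0 := by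
    intro u; cases u <;> rfl
  rw [sum_prod_bool (fun u bit => if bit = true then mergedP p S u none
      else 1 - mergedP p S u none)]
  apply Finset.prod_eq_one
  intro u _
  simp [h2 u]

/-! ### Reachability lemmas -/

lemma rtg_congr {α : Type*} {r r' : α → α → Prop} (h : ∀ a b, r a b ↔ r' a b) {x y : α} :
    Relation.ReflTransGen r x y ↔ Relation.ReflTransGen r' x y :=
  ⟨fun H => Relation.ReflTransGen.mono (by intro a b hab; exact (h a b).1 hab) _ _ H,
    fun H => Relation.ReflTransGen.mono (by intro a b hab; exact (h a b).2 hab) _ _ H⟩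

lemma reachR (ω : V → V → Bool) (S : Finset V) {w : V} (hw : w ∉ S) :
    (∃ s ∈ S, Relation.ReflTransGen
        (fun a b => ω a b = true ∧ a ∉ (∅ : Finset V) ∧ b ∉ (∅ : Finset V)) s w) ↔
      (∃ v, (v ∉ S ∧ ∃ s ∈ S, ω s v = true) ∧
        Relation.ReflTransGen (fun a b => a ∉ S ∧ b ∉ S ∧ ω a b = true) v w) := by
  constructor
  · rintro ⟨s, hs, hpath⟩
    induction hpath with
    | refl => exact absurd hs hw
    | @tail x y hxy hstep ih =>
      by_cases hx : x ∈ S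
      · exact ⟨y, ⟨hw, x, hx, hstep.1⟩, Relation.ReflTransGen.refl⟩
      · obtain ⟨v, hv, hp⟩ := ih hx
        exact ⟨v, hv, hp.tail ⟨hx, hw, hstep.1⟩⟩
  · rintro ⟨v, ⟨hv, s, hs, hsv⟩, hpath⟩
    refine ⟨s, hs, Relation.ReflTransGen.head ⟨hsv, by simp, by simp⟩ ?_⟩
    exact Relation.ReflTransGen.mono (by intro a b hab; exact ⟨hab.2.2, by simp, by simp⟩) _ _ hpath

lemma reachL (ω' : Option V → Option V → Bool) (S : Finset V)
    (h1 : ∀ a, ω' a none = false)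
    (h2 : ∀ v ∈ S, ω' none (some v) = false)
    (h3 : ∀ a b : V, (a ∈ S ∨ b ∈ S) → ω' (some a) (some b) = false)
    {w : V} (hw : w ∉ S) :
    (Relation.ReflTransGen
        (fun a b => ω' a b = true ∧ a ∉ (∅ : Finset (Option V)) ∧ b ∉ (∅ : Finset (Option V)))
        none (some w)) ↔
      (∃ v, (v ∉ S ∧ ω' none (some v) = true) ∧
        Relation.ReflTransGen (fun a b => a ∉ S ∧ b ∉ S ∧ ω' (some a) (some b) = true) v w) := by
  constructor
  · intro hpath
    have main : ∀ y, Relation.ReflTransGen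
        (fun a b => ω' a b = true ∧ a ∉ (∅ : Finset (Option V)) ∧ b ∉ (∅ : Finset (Option V)))
        none y → y = none ∨ ∃ v w', y = some w' ∧ (v ∉ S ∧ ω' none (some v) = true) ∧
          Relation.ReflTransGen (fun a b => a ∉ S ∧ b ∉ S ∧ ω' (some a) (some b) = true) v w' := by
      intro y hy
      induction hy with
      | refl => exact Or.inl rfl
      | @tail x y hxy hstep ih =>
        right
        obtain ⟨w', rfl⟩ : ∃ w', y = some w' := by
          cases y with
          | none => exact absurd hstep.1 (by simp [h1])
          | some w' => exact ⟨w', rfl⟩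
        have hw' : w' ∉ S := by
          cases x with
          | none =>
            intro hmem; exact absurd hstep.1 (by simp [h2 _ hmem])
          | some v₀ =>
            intro hmem; exact absurd hstep.1 (by simp [h3 v₀ w' (Or.inr hmem)])
        rcases ih with rfl | ⟨v, w'', heq, hv, hp⟩
        · exact ⟨w', w', rfl, ⟨hw', hstep.1⟩, Relation.ReflTransGen.refl⟩
        · obtain ⟨rfl⟩ : x = some w'' := heq
          have hx : w'' ∉ S := by
            intro hmem; exact absurd hstep.1 (by simp [h3 w'' w' (Or.inl hmem)])
          exact ⟨v, w', rfl, hv, hp.tail ⟨hx, hw', hstep.1⟩⟩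
    rcases main _ hpath with h | ⟨v, w', heq, hv, hp⟩
    · exact absurd h (by simp)
    · obtain rfl : w' = w := by injection heq with h; exact h.symm
      exact ⟨v, hv, hp⟩
  · rintro ⟨v, ⟨hv, hsv⟩, hpath⟩
    refine Relation.ReflTransGen.head ⟨hsv, by simp, by simp⟩ ?_
    exact Relation.ReflTransGen.lift some (by intro a b hab; exact ⟨hab.2.2, by simp, by simp⟩) _ _ hpath

/-- The flip equivalence on adjacency samples. -/
def flipE (α : Type*) : (α → α → Bool) ≃ (α → α → Bool) :=
  ⟨Function.swap, Function.swap, fun _ => rfl, fun _ => rfl⟩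

/-! ### The two reductions -/

set_option maxHeartbeats 2000000 in
lemma rhs_red [Fintype V] (p : V → V → ℝ) (S : Finset V) :
    spreadOn p S (Finset.univ \ S)
      = ∑ h : V → Bool × (V → Bool), (∏ v, CF p S v (h v)) * gfun S h := by
  unfold spreadOn
  have h1 : ∀ ω : V → V → Bool,
      sampleWeight p ω *
        (((Finset.univ \ S).filter fun w => ∃ s ∈ S, ReachB ω ∅ s w).card : ℝ)
      = (∏ v, ∏ u, if ω u v then p u v else 1 - p u v) *
          gfun S (fun v => mR S v (fun u => ω u v)) := by
    intro ω
    congr 1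
    · unfold sampleWeight
      exact Finset.prod_comm
    · unfold gfun
      congr 2
      apply Finset.filter_congr
      intro w hwmem
      have hw : w ∉ S := (Finset.mem_sdiff.mp hwmem).2
      unfold ReachB
      rw [show (∃ s ∈ S, Relation.ReflTransGen
          (fun a b => ω a b = true ∧ a ∉ (∅ : Finset V) ∧ b ∉ (∅ : Finset V)) s w) ↔
          (∃ v, (v ∉ S ∧ ∃ s ∈ S, ω s v = true) ∧
            Relation.ReflTransGen (fun a b => a ∉ S ∧ b ∉ S ∧ ω a b = true) v w)
          from reachR ω S hw]
      apply exists_congr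
      intro v
      have hbit : ((mR S v (fun u => ω u v)).1 = true) ↔ (v ∉ S ∧ ∃ s ∈ S, ω s v = true) := by
        unfold mR
        by_cases hv : v ∈ S
        · rw [memB_true hv]
          simp [hv]
        · rw [memB_false hv]
          simp only [Bool.false_eq_true, if_false]
          rw [orBitB_iff]
          constructor
          · rintro ⟨a, ha1, ha2⟩
            exact ⟨hv, a, memB_iff.mp ha1, ha2⟩
          · rintro ⟨_, s, hs1, hs2⟩
            exact ⟨s, memB_true hs1, hs2⟩
      have hrel : ∀ a b' : V, ((mR S b' (fun u => ω u b')).2 a = true)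
          ↔ (a ∉ S ∧ b' ∉ S ∧ ω a b' = true) := by
        intro a b'
        unfold mR
        simp only
        cases hab : (memB S a || memB S b')
        · have ha : a ∉ S := fun h => by rw [memB_true h] at hab; simp at hab
          have hb : b' ∉ S := fun h => by rw [memB_true h] at hab; simp at hab
          simp only [Bool.false_eq_true, if_false]
          constructor
          · intro hh; exact ⟨ha, hb, hh⟩
          · rintro ⟨_, _, hh⟩; exact hh
        · rw [if_pos rfl]
          constructor
          · intro hcon; exact absurd hcon (by simp)
          · rintro ⟨ha, hb, _⟩
            rw [memB_false ha, memB_false hb] at hab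
            simp at hab
      rw [hbit]
      exact and_congr Iff.rfl (rtg_congr hrel).symm
  rw [Fintype.sum_equiv (flipE V) _
      (fun τ : V → V → Bool =>
        (∏ v, ∏ u, if τ v u then p u v else 1 - p u v) *
          gfun S (fun v => mR S v (τ v)))
      (fun ω => (h1 ω).trans rfl)]
  rw [master (fun v (c : V → Bool) => ∏ u, if c u then p u v else 1 - p u v) (mR S) (gfun S)]
  refine Finset.sum_congr rfl fun h _ => ?_
  congr 1
  exact Finset.prod_congr rfl fun v _ => QiR p S v (h v)

set_option maxHeartbeats 2000000 in
lemma lhs_red [Fintype V] (p : V → V → ℝ) (S : Finset V) :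
    spreadOn (mergedP p S) {(none : Option V)}
        ((Finset.univ \ S).image (fun v => (some v : Option V)))
      = ∑ h : V → Bool × (V → Bool), (∏ v, CF p S v (h v)) * gfun S h := by
  unfold spreadOn
  have key : (∑ ω' : Option V → Option V → Bool,
      sampleWeight (mergedP p S) ω' *
        (((((Finset.univ \ S).image (fun v => (some v : Option V))).filter
            fun w => ∃ s ∈ ({(none : Option V)} : Finset (Option V)), ReachB ω' ∅ s w).card : ℝ)))
      = ∑ h : V → Bool × (V → Bool), (∏ v, CF p S v (h v)) * gfun S h := by
    have h1 : ∀ ω' : Option V → Option V → Bool,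
        sampleWeight (mergedP p S) ω' *
          (((((Finset.univ \ S).image (fun v => (some v : Option V))).filter
              fun w => ∃ s ∈ ({(none : Option V)} : Finset (Option V)), ReachB ω' ∅ s w).card : ℝ))
        = (∏ t : Option V, ∏ u : Option V,
              if ω' u t then mergedP p S u t else 1 - mergedP p S u t) *
            gfun S (fun v => mL S (some v) (fun u => ω' u (some v))) := by
      intro ω'
      have hWeq : sampleWeight (mergedP p S) ω'
          = ∏ t : Option V, ∏ u : Option V,
              if ω' u t then mergedP p S u t else 1 - mergedP p S u t := by
        unfold sampleWeight
        exact Finset.prod_comm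
      by_cases hleg : (∀ a, ω' a none = false) ∧ (∀ v ∈ S, ω' none (some v) = false) ∧
          (∀ a b : V, (a ∈ S ∨ b ∈ S) → ω' (some a) (some b) = false)
      · obtain ⟨hg1, hg2, hg3⟩ := hleg
        rw [hWeq]
        congr 1
        · congr 1
          have hc1 : Finset.filter
                (fun w => ∃ s ∈ ({(none : Option V)} : Finset (Option V)), ReachB ω' ∅ s w)
                ((Finset.univ \ S).image (fun v => (some v : Option V)))
              = Finset.filter (fun w => ReachB ω' ∅ none w)
                ((Finset.univ \ S).image (fun v => (some v : Option V))) := by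
            apply Finset.filter_congr
            intro w _
            simp
          rw [hc1, Finset.filter_image,
            Finset.card_image_of_injective _ (Option.some_injective V)]
          congr 1
          apply Finset.filter_congr
          intro w hwmem
          have hw : w ∉ S := (Finset.mem_sdiff.mp hwmem).2
          unfold ReachB
          rw [show (Relation.ReflTransGen
              (fun a b => ω' a b = true ∧ a ∉ (∅ : Finset (Option V)) ∧ b ∉ (∅ : Finset (Option V)))
              none (some w)) ↔
              (∃ v, (v ∉ S ∧ ω' none (some v) = true) ∧
                Relation.ReflTransGen
                  (fun a b => a ∉ S ∧ b ∉ S ∧ ω' (some a) (some b) = true) v w)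
              from reachL ω' S hg1 hg2 hg3 hw]
          apply exists_congr
          intro v
          have hbit : ((mL S (some v) (fun u => ω' u (some v))).1 = true)
              ↔ (v ∉ S ∧ ω' none (some v) = true) := by
            simp only [mL]
            by_cases hv : v ∈ S
            · rw [memB_true hv]
              simp only [if_true]
              constructor
              · intro hcon; exact absurd hcon (by simp)
              · rintro ⟨hvs, _⟩; exact absurd hv hvs
            · rw [memB_false hv]
              simp [hv]
          have hrel : ∀ a b' : V, ((mL S (some b') (fun u => ω' u (some b'))).2 a = true)
              ↔ (a ∉ S ∧ b' ∉ S ∧ ω' (some a) (some b') = true) := by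
            intro a b'
            simp only [mL]
            cases hab : (memB S a || memB S b')
            · have ha : a ∉ S := fun h => by rw [memB_true h] at hab; simp at hab
              have hb : b' ∉ S := fun h => by rw [memB_true h] at hab; simp at hab
              simp only [Bool.false_eq_true, if_false]
              constructor
              · intro hh; exact ⟨ha, hb, hh⟩
              · rintro ⟨_, _, hh⟩; exact hh
            · rw [if_pos rfl]
              constructor
              · intro hcon; exact absurd hcon (by simp)
              · rintro ⟨ha, hb, _⟩
                rw [memB_false ha, memB_false hb] at hab
                simp at hab
          rw [hbit]
          exact and_congr Iff.rfl (rtg_congr hrel).symm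
      · have hz : sampleWeight (mergedP p S) ω' = 0 := by
          push_neg at hleg
          unfold sampleWeight
          by_cases hA : ∀ a, ω' a none = false
          · by_cases hB : ∀ v ∈ S, ω' none (some v) = false
            · obtain ⟨a, b, hab, habe⟩ := hleg hA hB
              refine Finset.prod_eq_zero (Finset.mem_univ (some a)) ?_
              refine Finset.prod_eq_zero (Finset.mem_univ (some b)) ?_
              have : ω' (some a) (some b) = true := by
                cases hob : ω' (some a) (some b)
                · exact absurd hob habe
                · rfl
              rw [this, if_pos rfl]
              simp [mergedP, hab]
            · push_neg at hB
              obtain ⟨v, hv, hve⟩ := hB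
              refine Finset.prod_eq_zero (Finset.mem_univ (none : Option V)) ?_
              refine Finset.prod_eq_zero (Finset.mem_univ (some v)) ?_
              have : ω' none (some v) = true := by
                cases hob : ω' none (some v)
                · exact absurd hob hve
                · rfl
              rw [this, if_pos rfl]
              simp [mergedP, hv]
          · push_neg at hA
            obtain ⟨a, ha⟩ := hA
            refine Finset.prod_eq_zero (Finset.mem_univ a) ?_
            refine Finset.prod_eq_zero (Finset.mem_univ (none : Option V)) ?_
            have : ω' a none = true := by
              cases hob : ω' a none
              · exact absurd hob ha
              · rfl
            rw [this, if_pos rfl]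
            cases a <;> rfl
        rw [hz, hWeq.symm, hz]
        ring
    refine Eq.trans (Fintype.sum_equiv (flipE (Option V)) _
        (fun τ : Option V → Option V → Bool =>
          (∏ t : Option V, ∏ u : Option V,
              if τ t u then mergedP p S u t else 1 - mergedP p S u t) *
            gfun S (fun v => mL S (some v) (τ (some v))))
        (fun ω' => (h1 ω').trans rfl)) ?_
    rw [master (fun t (c : Option V → Bool) =>
          ∏ u : Option V, if c u then mergedP p S u t else 1 - mergedP p S u t)
        (mL S) (fun h => gfun S (fun v => h (some v)))]
    have h3 := Equiv.sum_comp (Equiv.piOptionEquivProd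
        (β := fun _ : Option V => Bool × (V → Bool))).symm
        (fun h : Option V → Bool × (V → Bool) =>
          (∏ t : Option V, ∑ c : Option V → Bool,
            if mL S t c = h t
              then (∏ u : Option V, if c u then mergedP p S u t else 1 - mergedP p S u t)
              else 0) * gfun S (fun v => h (some v)))
    rw [← h3, Fintype.sum_prod_type]
    have h4 : ∀ (x : Bool × (V → Bool)) (k : V → Bool × (V → Bool)),
        (∏ t : Option V, ∑ c : Option V → Bool,
            if mL S t c = ((Equiv.piOptionEquivProd
                (β := fun _ : Option V => Bool × (V → Bool))).symm (x, k)) t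
              then (∏ u : Option V, if c u then mergedP p S u t else 1 - mergedP p S u t)
              else 0)
        = (∑ c : Option V → Bool,
            if mL S none c = x
              then (∏ u : Option V, if c u then mergedP p S u none else 1 - mergedP p S u none)
              else 0) *
          ∏ v : V, (∑ c : Option V → Bool,
            if mL S (some v) c = k v
              then (∏ u : Option V,
                if c u then mergedP p S u (some v) else 1 - mergedP p S u (some v))
              else 0) := by
      intro x k
      rw [Fintype.prod_option]
      rfl
    simp_rw [h4]
    have h5 : ∀ (x : Bool × (V → Bool)) (k : V → Bool × (V → Bool)),
        gfun S (fun v => ((Equiv.piOptionEquivProd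
            (β := fun _ : Option V => Bool × (V → Bool))).symm (x, k)) (some v)) = gfun S k := by
      intro x k; rfl
    simp_rw [h5, mul_assoc, ← Finset.mul_sum, ← Finset.sum_mul]
    rw [QiLnone p S, one_mul]
    refine Finset.sum_congr rfl fun k _ => ?_
    congr 1
    exact Finset.prod_congr rfl fun v _ => QiL p S v (k v)
  convert key using 2
  all_goals exact congrArg (fun i => @Finset.univ _ i) (Subsingleton.elim _ _)

/-- merging multiple seeds into a single unified seed preserves
the expected spread: the expected number of activated original non-seed
vertices with the unified seed `none` in the merged graph equals the expected
number of activated non-seed vertices with seed set `S` in the original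
graph. -/
theorem merge_seeds_preserves_spread [Fintype V] (p : V → V → ℝ)
    (hp : ∀ u v, 0 ≤ p u v ∧ p u v ≤ 1) (S : Finset V) :
    spreadOn (mergedP p S) {(none : Option V)}
        ((Finset.univ \ S).image (fun v => (some v : Option V))) =
      spreadOn p S (Finset.univ \ S) := by
  rw [lhs_red p S, rhs_red p S]
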